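/- Let G be a finite group, E a number field with ring of integers O_E, let V be a free E[G]-module of rank d, and let X, Y be full O_E[G]-lattices in V ⊆ E[G]^d. Define 𝒜(X,Y) := {λ ∈ E[G] : λX ⊆ Y}, and for an O_E[G]-lattice M in E[G]^d (resp. E[G]) let M* be its dual with respect to the pairing s (resp. t). Then (X, Y*) = 𝒜(X,Y)*, where (X, Y*) denotes the O_E-module generated by all (x, y*) with x ∈ X, y* ∈ Y*, and the pairing ( · , · ) : E[G]^d × E[G]^d → E[G] is (μ,ν) = Σ_{g∈G} s(gμ,ν)g^{-1}. -/

import Mathlib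

/-! Auxiliary general lemmas about lattices over Dedekind domains. -/

open Submodule Module

universe u

/-- Over a Noetherian ring, a submodule contained in a f.g. submodule is f.g. -/
theorem auxFgOfLe {R M : Type*} [Ring R] [AddCommGroup M] [Module R M]
    [IsNoetherianRing R] {N P : Submodule R M} (h : N ≤ P) (hP : P.FG) : N.FG := by
  have hNoeth : IsNoetherian R ↥P := isNoetherian_of_fg_of_noetherian P hP
  have h3 : (N.comap P.subtype).FG := IsNoetherian.noetherian _
  have h4 : Submodule.map P.subtype (N.comap P.subtype) = N := by
    rw [Submodule.map_comap_subtype, inf_eq_right.mpr h]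
  exact h4 ▸ h3.map _

section DenomLemmas

variable {R K W : Type*} [CommRing R] [IsDomain R] [Field K] [Algebra R K]
  [IsFractionRing R K] [AddCommGroup W] [Module K W] [Module R W] [IsScalarTower R K W]

theorem auxExistsSmulMem (N : Submodule R W) (v : W)
    (hv : v ∈ Submodule.span K (N : Set W)) :
    ∃ c : R, c ≠ 0 ∧ algebraMap R K c • v ∈ N := by
  induction hv using Submodule.span_induction with
  | mem x hx => exact ⟨1, one_ne_zero, by rw [map_one, one_smul]; exact hx⟩
  | zero => exact ⟨1, one_ne_zero, by rw [smul_zero]; exact N.zero_mem⟩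
  | add x y hx hy ihx ihy =>
    obtain ⟨c₁, hc₁, h₁⟩ := ihx
    obtain ⟨c₂, hc₂, h₂⟩ := ihy
    refine ⟨c₁ * c₂, mul_ne_zero hc₁ hc₂, ?_⟩
    rw [smul_add, map_mul]
    refine N.add_mem ?_ ?_
    · rw [mul_comm, mul_smul, algebraMap_smul]
      exact N.smul_mem c₂ h₁
    · rw [mul_smul, algebraMap_smul]
      exact N.smul_mem c₁ h₂
  | smul e x hx ihx =>
    obtain ⟨c, hc, h⟩ := ihx
    obtain ⟨a, b, hb, hab⟩ := IsFractionRing.div_surjective (A := R) e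
    have hb0 : b ≠ 0 := nonZeroDivisors.ne_zero hb
    have hbK : algebraMap R K b ≠ 0 := by
      simpa using (map_ne_zero_iff _ (IsFractionRing.injective R K)).mpr hb0
    refine ⟨b * c, mul_ne_zero hb0 hc, ?_⟩
    have key : algebraMap R K (b * c) • (e • x) = algebraMap R K a • (algebraMap R K c • x) := by
      rw [map_mul, smul_smul, smul_smul]
      congr 1
      rw [← hab]
      field_simp
    rw [key, algebraMap_smul]
    exact N.smul_mem a h

theorem auxExistsDenomFinset {ι : Type*} (N : Submodule R W) (s : Finset ι) (v : ι → W)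
    (hv : ∀ i ∈ s, v i ∈ Submodule.span K (N : Set W)) :
    ∃ c : R, c ≠ 0 ∧ ∀ i ∈ s, algebraMap R K c • v i ∈ N := by
  classical
  induction s using Finset.induction with
  | empty => exact ⟨1, one_ne_zero, fun i hi => absurd hi (Finset.notMem_empty i)⟩
  | insert a s hnotmem ih =>
    obtain ⟨c₂, hc₂, h₂⟩ := ih fun i hi => hv i (Finset.mem_insert_of_mem hi)
    obtain ⟨c₁, hc₁, h₁⟩ := auxExistsSmulMem N (v a) (hv a (Finset.mem_insert_self a s))
    refine ⟨c₁ * c₂, mul_ne_zero hc₁ hc₂, fun i hi => ?_⟩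
    rcases Finset.mem_insert.mp hi with rfl | hi
    · rw [map_mul, mul_comm, mul_smul, algebraMap_smul]
      exact N.smul_mem c₂ h₁
    · rw [map_mul, mul_smul, algebraMap_smul]
      exact N.smul_mem c₁ (h₂ i hi)

theorem auxSmulSpanRange {ι : Type*} (e : K) (w : ι → W) {z : W}
    (hz : z ∈ Submodule.span R (Set.range w)) :
    e • z ∈ Submodule.span R (Set.range fun l => e • w l) := by
  induction hz using Submodule.span_induction with
  | mem x hx =>
    obtain ⟨l, rfl⟩ := hx
    exact Submodule.subset_span ⟨l, rfl⟩
  | zero => rw [smul_zero]; exact Submodule.zero_mem _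
  | add x y hx hy ihx ihy => rw [smul_add]; exact Submodule.add_mem _ ihx ihy
  | smul r x hx ihx =>
    have : e • r • x = r • e • x := by
      rw [← algebraMap_smul K r x, smul_smul, mul_comm, ← smul_smul, algebraMap_smul]
    rw [this]
    exact Submodule.smul_mem _ r ihx

end DenomLemmas

/-- The key duality result: over a Dedekind domain `R` with fraction field `K`, a full
finitely generated `R`-lattice `M` in a finite-dimensional `K`-vector space contains every
vector on which all `M`-integral functionals take integral values. -/
theorem auxDedekindDual {R : Type*} [CommRing R] [IsDedekindDomain R] {K : Type*} [Field K]
    [Algebra R K] [IsFractionRing R K] (n : ℕ) :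
    ∀ (V : Type u) [AddCommGroup V] [Module K V] [Module R V]
      [IsScalarTower R K V] [FiniteDimensional K V], Module.finrank K V ≤ n →
      ∀ M : Submodule R V, M.FG → Submodule.span K (M : Set V) = ⊤ →
      ∀ x : V, (∀ f : V →ₗ[K] K, (∀ m ∈ M, ∃ r : R, algebraMap R K r = f m) →
        ∃ r : R, algebraMap R K r = f x) → x ∈ M := by
  induction n with
  | zero =>
    intro V _ _ _ _ _ hn M hfg hfull x hx
    have hsub : Subsingleton V := by
      have : Module.finrank K V = 0 := Nat.le_zero.mp hn
      exact (Module.finrank_zero_iff (R := K)).mp this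
    exact Subsingleton.elim x 0 ▸ M.zero_mem
  | succ n ih =>
    intro V _ _ _ _ _ hn M hfg hfull x hx
    by_cases hV : Subsingleton V
    · exact Subsingleton.elim x 0 ▸ M.zero_mem
    have : Nontrivial V := not_subsingleton_iff_nontrivial.mp hV
    obtain ⟨v, hv⟩ := exists_ne (0 : V)
    obtain ⟨φ, hφ⟩ : ∃ φ : Module.Dual K V, φ v ≠ 0 := by
      by_contra h
      push_neg at h
      exact hv ((Module.forall_dual_apply_eq_zero_iff K v).mp h)
    set π : V →ₗ[K] K := (φ v)⁻¹ • φ with hπ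
    have hπv : π v = 1 := by
      simp [hπ, smul_eq_mul, inv_mul_cancel₀ hφ]
    have hsurj : Function.Surjective π := fun c =>
      ⟨c • v, by rw [map_smul, hπv, smul_eq_mul, mul_one]⟩
    set πR := π.restrictScalars R with hπR
    set I : Submodule R K := M.map πR with hI
    have hIfg : I.FG := hfg.map _
    have hIfrac : IsFractional (nonZeroDivisors R) I :=
      FractionalIdeal.isFractional_of_fg hIfg
    set J : FractionalIdeal (nonZeroDivisors R) K := ⟨I, hIfrac⟩ with hJ
    have hmemJ : ∀ z : K, z ∈ J ↔ z ∈ I := fun z => Iff.rfl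
    -- J ≠ 0
    have hspanI : Submodule.span K (π '' (M : Set V)) = ⊤ := by
      rw [← Submodule.map_span, hfull, Submodule.map_top]
      exact LinearMap.range_eq_top.mpr hsurj
    have hJ0 : J ≠ 0 := by
      intro h0
      have hsub : π '' (M : Set V) ⊆ {0} := by
        rintro z ⟨m, hm, rfl⟩
        have h1 : πR m ∈ J := Submodule.mem_map_of_mem hm
        rw [h0] at h1
        simpa using ((FractionalIdeal.mem_zero_iff _).mp h1 : π m = 0)
      have h2 : (⊤ : Submodule K K) ≤ ⊥ := by
        rw [← hspanI, ← Submodule.span_zero_singleton K]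
        exact Submodule.span_mono hsub
      exact one_ne_zero ((Submodule.mem_bot K).mp (h2 Submodule.mem_top))
    have hJJ : J * J⁻¹ = 1 := mul_inv_cancel₀ hJ0
    have hJJ' : J⁻¹ * J = 1 := by rw [mul_comm]; exact hJJ
    have hJi0 : J⁻¹ ≠ 0 := by
      intro h0
      rw [h0, mul_zero] at hJJ
      exact zero_ne_one hJJ
    have hJinvinv : J⁻¹⁻¹ = J := by
      have h2 : J⁻¹ * J⁻¹⁻¹ = 1 := mul_inv_cancel₀ hJi0
      calc J⁻¹⁻¹ = 1 * J⁻¹⁻¹ := (one_mul _).symm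
        _ = J * (J⁻¹ * J⁻¹⁻¹) := by rw [← hJJ, mul_assoc]
        _ = J := by rw [h2, mul_one]
    -- π x ∈ I
    have hπxI : π x ∈ I := by
      have hπx : π x ∈ J⁻¹⁻¹ := by
        rw [FractionalIdeal.mem_inv_iff hJi0]
        intro y hy
        have hf : ∀ m ∈ M, ∃ r : R, algebraMap R K r = (y • π) m := by
          intro m hm
          have h1 : π m ∈ J := Submodule.mem_map_of_mem hm
          have h2 := FractionalIdeal.mul_mem_mul hy h1
          rw [hJJ'] at h2
          obtain ⟨r, hr⟩ := (FractionalIdeal.mem_one_iff _).mp h2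
          exact ⟨r, hr.trans rfl⟩
        obtain ⟨r, hr⟩ := hx (y • π) hf
        exact (FractionalIdeal.mem_one_iff _).mpr ⟨r, hr.trans (mul_comm y (π x))⟩
      rwa [hJinvinv] at hπx
    obtain ⟨m, hmM, hm⟩ : ∃ m ∈ M, πR m = π x := Submodule.mem_map.mp hπxI
    -- the submodule W
    set W : Submodule R V :=
      { carrier := {w | ∀ c ∈ I, c • w ∈ M}
        add_mem' := fun ha hb c hc => by
          rw [smul_add]; exact M.add_mem (ha c hc) (hb c hc)
        zero_mem' := fun c hc => by rw [smul_zero]; exact M.zero_mem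
        smul_mem' := fun r w hw c hc => by
          have : c • r • w = r • c • w := by
            rw [← algebraMap_smul K r w, smul_smul, mul_comm, ← smul_smul,
              algebraMap_smul]
          rw [this]
          exact M.smul_mem r (hw c hc) } with hW
    have hW1 : (1 : K) ∈ W.map πR := by
      have hle : (↑(J * J⁻¹) : Submodule R K) ≤ W.map πR := by
        rw [FractionalIdeal.coe_mul]
        refine Submodule.mul_le.mpr fun a ha b hb => ?_
        obtain ⟨m₀, hm₀, rfl⟩ := Submodule.mem_map.mp (ha : a ∈ I)
        refine Submodule.mem_map.mpr ⟨b • m₀, ?_, ?_⟩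
        · intro c hc
          have h1 : c * b ∈ J * J⁻¹ := FractionalIdeal.mul_mem_mul hc hb
          rw [hJJ] at h1
          obtain ⟨r, hr⟩ := (FractionalIdeal.mem_one_iff _).mp h1
          rw [smul_smul, ← hr, algebraMap_smul]
          exact M.smul_mem r hm₀
        · show π (b • m₀) = πR m₀ * b
          rw [map_smul, smul_eq_mul, mul_comm]; rfl
      refine hle ?_
      rw [hJJ]
      exact (FractionalIdeal.mem_one_iff _).mpr ⟨1, map_one _⟩
    obtain ⟨w, hwW, hw1⟩ := Submodule.mem_map.mp hW1
    -- τ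
    set τ : V →ₗ[K] V := LinearMap.id - π.smulRight w with hτdef
    have hτ : ∀ u, τ u = u - π u • w := fun u => rfl
    have hτker : ∀ u, π (τ u) = 0 := fun u => by
      rw [hτ, map_sub, map_smul, smul_eq_mul, (show π w = 1 from hw1), mul_one,
        sub_self]
    have hτM : ∀ m' ∈ M, τ m' ∈ M := fun m' hm' => by
      rw [hτ]
      exact M.sub_mem hm' (hwW _ (Submodule.mem_map_of_mem hm'))
    have hτfix : ∀ u, π u = 0 → τ u = u := fun u hu => by
      rw [hτ, hu, zero_smul, sub_zero]
    set V' := LinearMap.ker π with hV'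
    set ι : ↥V' →ₗ[R] V := V'.subtype.restrictScalars R with hι
    set M' : Submodule R ↥V' := M.comap ι with hM'
    -- finrank
    have hn' : Module.finrank K ↥V' ≤ n := by
      rw [hV']
      have h1 := LinearMap.finrank_range_add_finrank_ker π
      rw [LinearMap.range_eq_top.mpr hsurj, finrank_top, Module.finrank_self] at h1
      omega
    -- FG
    have hM'fg : M'.FG := by
      have hNfg : (LinearMap.range ι ⊓ M).FG := auxFgOfLe inf_le_right hfg
      refine Submodule.fg_of_fg_map_injective ι Subtype.val_injective ?_
      rw [Submodule.map_comap_eq]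
      exact hNfg
    -- τ'
    set τ' : V →ₗ[K] ↥V' := τ.codRestrict V' (fun u => LinearMap.mem_ker.mpr (hτker u))
      with hτ'
    have hτ'val : ∀ u, ((τ' u : ↥V') : V) = τ u := fun u => rfl
    have hτ'M : ∀ m'' ∈ M, τ' m'' ∈ M' := fun m'' h => by
      show ι (τ' m'') ∈ M
      exact hτM m'' h
    -- fullness of M'
    have hfull' : Submodule.span K (M' : Set ↥V') = ⊤ := by
      rw [eq_top_iff]
      rintro ⟨u, hu⟩ -
      have h1 : u ∈ Submodule.span K (M : Set V) := hfull ▸ Submodule.mem_top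
      have h2 : τ' u ∈ Submodule.map τ' (Submodule.span K (M : Set V)) :=
        Submodule.mem_map_of_mem h1
      rw [Submodule.map_span] at h2
      have h3 : τ' u ∈ Submodule.span K (M' : Set ↥V') := by
        refine Submodule.span_mono ?_ h2
        rintro _ ⟨m'', hm'', rfl⟩
        exact hτ'M m'' hm''
      have h4 : τ' u = ⟨u, hu⟩ := Subtype.ext (hτfix u (LinearMap.mem_ker.mp hu))
      rwa [h4] at h3
    -- x' and its property
    set x' : V := x - m with hx'def
    have hx'ker : x' ∈ V' := by
      refine LinearMap.mem_ker.mpr ?_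
      rw [map_sub, (show π m = π x from hm), sub_self]
    have hxsplit : x = x' + m := by rw [hx'def, sub_add_cancel]
    have hx'cond : ∀ f' : ↥V' →ₗ[K] K,
        (∀ m'' ∈ M', ∃ r : R, algebraMap R K r = f' m'') →
        ∃ r : R, algebraMap R K r = f' ⟨x', hx'ker⟩ := by
      intro f' hf'
      obtain ⟨r1, hr1⟩ := hx (f' ∘ₗ τ') fun m'' h => hf' _ (hτ'M m'' h)
      obtain ⟨r2, hr2⟩ := hf' (τ' m) (hτ'M m hmM)
      refine ⟨r1 - r2, ?_⟩
      have hτ'x' : τ' x' = ⟨x', hx'ker⟩ :=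
        Subtype.ext (hτfix x' (LinearMap.mem_ker.mp hx'ker))
      have hτx : τ' x = τ' x' + τ' m := by rw [← map_add, ← hxsplit]
      rw [map_sub, hr1, hr2, LinearMap.comp_apply, hτx, map_add, hτ'x',
        add_sub_cancel_right]
    have hx'M' := ih ↥V' hn' M' hM'fg hfull' ⟨x', hx'ker⟩ hx'cond
    have hx'M : x' ∈ M := hx'M'
    rw [hxsplit]
    exact M.add_mem hx'M hmM

section

variable {E : Type*} [Field E] {G : Type*} [Group G] [Fintype G]

/-- The trace pairing on the group algebra `E[G]`, extending
`t(g,h) = 1` if `gh = 1` and `0` otherwise. -/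
noncomputable def tracePairing (x y : MonoidAlgebra E G) : E :=
  ∑ g : G, x.coeff g * y.coeff g⁻¹

/-- The `d`-fold orthogonal sum of the trace pairing on `E[G]^d`. -/
noncomputable def sPairing {d : ℕ} (x y : Fin d → MonoidAlgebra E G) : E :=
  ∑ i, tracePairing (x i) (y i)

/-- The `E[G]`-valued pairing `(μ,ν) = ∑_{g ∈ G} s(gμ, ν) g⁻¹` on `E[G]^d`. -/
noncomputable def gPairing {d : ℕ} (μ ν : Fin d → MonoidAlgebra E G) : MonoidAlgebra E G :=
  ∑ g : G, MonoidAlgebra.single g⁻¹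
    (sPairing (fun i => MonoidAlgebra.single g (1 : E) * μ i) ν)

/-! ### Bilinearity and other computation lemmas -/

theorem tracePairing_add_left (x x' y : MonoidAlgebra E G) :
    tracePairing (x + x') y = tracePairing x y + tracePairing x' y := by
  unfold tracePairing
  rw [← Finset.sum_add_distrib]
  exact Finset.sum_congr rfl fun g _ => by
    rw [MonoidAlgebra.coeff_add, Finsupp.add_apply, add_mul]

theorem tracePairing_smul_left (e : E) (x y : MonoidAlgebra E G) :
    tracePairing (e • x) y = e * tracePairing x y := by
  unfold tracePairing
  rw [Finset.mul_sum]
  exact Finset.sum_congr rfl fun g _ => by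
    rw [MonoidAlgebra.coeff_smul, Finsupp.smul_apply, smul_eq_mul, mul_assoc]

theorem tracePairing_comm (x y : MonoidAlgebra E G) :
    tracePairing x y = tracePairing y x := by
  unfold tracePairing
  refine Fintype.sum_equiv (Equiv.inv G) _ _ fun g => ?_
  simp only [Equiv.inv_apply, inv_inv]
  exact mul_comm _ _

theorem tracePairing_add_right (x y y' : MonoidAlgebra E G) :
    tracePairing x (y + y') = tracePairing x y + tracePairing x y' := by
  rw [tracePairing_comm, tracePairing_add_left, tracePairing_comm y x,
    tracePairing_comm y' x]

theorem tracePairing_smul_right (e : E) (x y : MonoidAlgebra E G) :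
    tracePairing x (e • y) = e * tracePairing x y := by
  rw [tracePairing_comm, tracePairing_smul_left, tracePairing_comm y x]

/-- The trace pairing as a bundled bilinear form. -/
noncomputable def trForm : LinearMap.BilinForm E (MonoidAlgebra E G) :=
  LinearMap.mk₂ E tracePairing tracePairing_add_left
    (fun e x y => tracePairing_smul_left e x y)
    tracePairing_add_right (fun e x y => tracePairing_smul_right e x y)

@[simp] theorem trForm_apply (x y : MonoidAlgebra E G) :
    trForm x y = tracePairing x y := rfl

theorem sPairing_add_left {d : ℕ} (x x' y : Fin d → MonoidAlgebra E G) :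
    sPairing (x + x') y = sPairing x y + sPairing x' y := by
  unfold sPairing
  rw [← Finset.sum_add_distrib]
  exact Finset.sum_congr rfl fun i _ => by
    rw [Pi.add_apply, tracePairing_add_left]

theorem sPairing_smul_left {d : ℕ} (e : E) (x y : Fin d → MonoidAlgebra E G) :
    sPairing (e • x) y = e * sPairing x y := by
  unfold sPairing
  rw [Finset.mul_sum]
  exact Finset.sum_congr rfl fun i _ => by
    rw [Pi.smul_apply, tracePairing_smul_left]

theorem sPairing_comm {d : ℕ} (x y : Fin d → MonoidAlgebra E G) :
    sPairing x y = sPairing y x :=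
  Finset.sum_congr rfl fun i _ => tracePairing_comm _ _

theorem sPairing_add_right {d : ℕ} (x y y' : Fin d → MonoidAlgebra E G) :
    sPairing x (y + y') = sPairing x y + sPairing x y' := by
  rw [sPairing_comm, sPairing_add_left, sPairing_comm y x, sPairing_comm y' x]

theorem sPairing_smul_right {d : ℕ} (e : E) (x y : Fin d → MonoidAlgebra E G) :
    sPairing x (e • y) = e * sPairing x y := by
  rw [sPairing_comm, sPairing_smul_left, sPairing_comm y x]

/-- The pairing `s` as a bundled bilinear form. -/
noncomputable def sForm (d : ℕ) : LinearMap.BilinForm E (Fin d → MonoidAlgebra E G) :=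
  LinearMap.mk₂ E sPairing sPairing_add_left
    (fun e x y => sPairing_smul_left e x y)
    sPairing_add_right (fun e x y => sPairing_smul_right e x y)

@[simp] theorem sForm_apply {d : ℕ} (x y : Fin d → MonoidAlgebra E G) :
    sForm d x y = sPairing x y := rfl

theorem tracePairing_single_left (a : G) (c : E) (y : MonoidAlgebra E G) :
    tracePairing (MonoidAlgebra.single a c) y = c * y.coeff a⁻¹ := by
  classical
  unfold tracePairing
  rw [Finset.sum_eq_single a]
  · rw [MonoidAlgebra.coeff_single, Finsupp.single_apply, if_pos rfl]
  · intro g _ hg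
    rw [MonoidAlgebra.coeff_single, Finsupp.single_apply, if_neg (Ne.symm hg), zero_mul]
  · intro h; exact absurd (Finset.mem_univ a) h

theorem tracePairing_single_right (a : G) (c : E) (y : MonoidAlgebra E G) :
    tracePairing y (MonoidAlgebra.single a c) = y.coeff a⁻¹ * c := by
  rw [tracePairing_comm, tracePairing_single_left]
  exact mul_comm _ _

/-- Decomposition of an element of the group algebra into singles. -/
theorem sum_coeff_single (z : MonoidAlgebra E G) :
    ∑ g : G, z.coeff g • (MonoidAlgebra.single g (1 : E)) = z := by
  classical
  ext h
  rw [MonoidAlgebra.coeff_sum, Finset.sum_apply']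
  simp only [MonoidAlgebra.smul_single', mul_one, MonoidAlgebra.coeff_single, Finsupp.single_apply]
  rw [Finset.sum_ite_eq' Finset.univ h (fun g => z.coeff g), if_pos (Finset.mem_univ h)]

theorem coeff_sum_single (c : G → E) (g : G) :
    (∑ h : G, MonoidAlgebra.single h (c h) : MonoidAlgebra E G).coeff g = c g := by
  classical
  rw [MonoidAlgebra.coeff_sum, Finset.sum_apply']
  simp only [MonoidAlgebra.coeff_single, Finsupp.single_apply]
  rw [Finset.sum_ite_eq' Finset.univ g c, if_pos (Finset.mem_univ g)]

theorem trForm_nondeg :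
    (trForm (E := E) (G := G)).Nondegenerate := by
  refine ⟨fun x hx => ?_, fun x hx => ?_⟩
  · ext g
    have := hx (MonoidAlgebra.single g⁻¹ 1)
    rw [trForm_apply, tracePairing_single_right, inv_inv, mul_one] at this
    simpa using this
  · ext g
    have := hx (MonoidAlgebra.single g⁻¹ 1)
    rw [trForm_apply, tracePairing_single_left, inv_inv, one_mul] at this
    simpa using this

theorem sPairing_pi_single {d : ℕ} (z : Fin d → MonoidAlgebra E G) (i : Fin d)
    (y : MonoidAlgebra E G) :
    sPairing z (Pi.single i y) = tracePairing (z i) y := by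
  classical
  unfold sPairing
  rw [Finset.sum_eq_single i]
  · rw [Pi.single_eq_same]
  · intro j _ hj
    rw [Pi.single_eq_of_ne hj]
    show tracePairing (z j) 0 = 0
    unfold tracePairing
    simp
  · intro h; exact absurd (Finset.mem_univ i) h

theorem sForm_nondeg (d : ℕ) :
    (sForm (E := E) (G := G) d).Nondegenerate := by
  refine ⟨fun x hx => ?_, fun x hx => ?_⟩
  · funext i
    refine trForm_nondeg.1 (x i) fun y => ?_
    have := hx (Pi.single i y)
    rw [sForm_apply, sPairing_pi_single] at this
    exact this
  · funext i
    refine trForm_nondeg.1 (x i) fun y => ?_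
    have := hx (Pi.single i y)
    rw [sForm_apply, sPairing_comm, sPairing_pi_single] at this
    exact this

/-- The fundamental adjunction between the pairings. -/
theorem tracePairing_gPairing (d : ℕ) (μ ν : Fin d → MonoidAlgebra E G)
    (lam : MonoidAlgebra E G) :
    tracePairing (gPairing μ ν) lam = sPairing (fun i => lam * μ i) ν := by
  classical
  -- left-hand side
  have hL : tracePairing (gPairing μ ν) lam =
      ∑ g : G, sPairing (fun i => MonoidAlgebra.single g (1 : E) * μ i) ν * lam.coeff g := by
    unfold gPairing
    rw [show tracePairing (∑ g : G, MonoidAlgebra.single g⁻¹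
        (sPairing (fun i => MonoidAlgebra.single g (1 : E) * μ i) ν)) lam =
        trForm (∑ g : G, MonoidAlgebra.single g⁻¹
        (sPairing (fun i => MonoidAlgebra.single g (1 : E) * μ i) ν)) lam from rfl]
    rw [LinearMap.BilinForm.sum_left]
    exact Finset.sum_congr rfl fun g _ => by
      rw [trForm_apply, tracePairing_single_left, inv_inv]
  -- right-hand side
  have hdecomp : (fun i => lam * μ i) =
      ∑ g : G, lam.coeff g • (fun i => MonoidAlgebra.single g (1 : E) * μ i) := by
    funext i
    rw [Finset.sum_apply]
    conv_lhs => rw [← sum_coeff_single lam]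
    rw [Finset.sum_mul]
    exact Finset.sum_congr rfl fun g _ => by
      rw [smul_mul_assoc]
      rfl
  have hR : sPairing (fun i => lam * μ i) ν =
      ∑ g : G, lam.coeff g * sPairing (fun i => MonoidAlgebra.single g (1 : E) * μ i) ν := by
    rw [show sPairing (fun i => lam * μ i) ν = sForm d (fun i => lam * μ i) ν from rfl,
      hdecomp]
    rw [LinearMap.BilinForm.sum_left]
    exact Finset.sum_congr rfl fun g _ => by
      rw [LinearMap.BilinForm.smul_left]
      rfl
  rw [hL, hR]
  exact Finset.sum_congr rfl fun g _ => mul_comm _ _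

/-- Every linear functional on `E[G]` is represented by the trace pairing. -/
theorem trForm_represents (f : MonoidAlgebra E G →ₗ[E] E) (z : MonoidAlgebra E G) :
    tracePairing z (∑ h : G, MonoidAlgebra.single h (f (MonoidAlgebra.single h⁻¹ 1))) =
      f z := by
  unfold tracePairing
  have h1 : ∀ g : G,
      (∑ h : G, MonoidAlgebra.single h (f (MonoidAlgebra.single h⁻¹ 1)) :
        MonoidAlgebra E G).coeff g⁻¹ = f (MonoidAlgebra.single g 1) := by
    intro g
    rw [coeff_sum_single (fun h => f (MonoidAlgebra.single h⁻¹ 1)) g⁻¹, inv_inv]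
  calc ∑ g : G, z.coeff g *
        (∑ h : G, MonoidAlgebra.single h (f (MonoidAlgebra.single h⁻¹ 1)) :
          MonoidAlgebra E G).coeff g⁻¹
      = ∑ g : G, z.coeff g * f (MonoidAlgebra.single g 1) := by
        exact Finset.sum_congr rfl fun g _ => by rw [h1 g]
    _ = f (∑ g : G, z.coeff g • MonoidAlgebra.single g 1) := by
        rw [map_sum]
        exact Finset.sum_congr rfl fun g _ => by rw [map_smul, smul_eq_mul]
    _ = f z := by rw [sum_coeff_single]

/-- Every linear functional on `E[G]^d` is represented by the pairing `s`. -/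
theorem sForm_represents {d : ℕ} (f : (Fin d → MonoidAlgebra E G) →ₗ[E] E)
    (z : Fin d → MonoidAlgebra E G) :
    sPairing z (fun i => ∑ h : G, MonoidAlgebra.single h
      (f (Pi.single i (MonoidAlgebra.single h⁻¹ 1)))) = f z := by
  classical
  unfold sPairing
  have h1 : ∀ (i : Fin d) (g : G),
      (∑ h : G, MonoidAlgebra.single h (f (Pi.single i (MonoidAlgebra.single h⁻¹ 1))) :
        MonoidAlgebra E G).coeff g⁻¹ = f (Pi.single i (MonoidAlgebra.single g 1)) := by
    intro i g
    rw [coeff_sum_single (fun h => f (Pi.single i (MonoidAlgebra.single h⁻¹ 1))) g⁻¹,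
      inv_inv]
  have h2 : ∀ i : Fin d, tracePairing (z i)
      (∑ h : G, MonoidAlgebra.single h (f (Pi.single i (MonoidAlgebra.single h⁻¹ 1)))) =
      ∑ g : G, (z i).coeff g * f (Pi.single i (MonoidAlgebra.single g 1)) := by
    intro i
    unfold tracePairing
    exact Finset.sum_congr rfl fun g _ => by rw [h1 i g]
  rw [Finset.sum_congr rfl fun i _ => h2 i]
  have h3 : z = ∑ i : Fin d, ∑ g : G,
      (z i).coeff g • (Pi.single i (MonoidAlgebra.single g (1 : E)) : Fin d → MonoidAlgebra E G) := by
    funext j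
    rw [Finset.sum_apply]
    have : ∀ i : Fin d, (∑ g : G, (z i).coeff g • (Pi.single i
        (MonoidAlgebra.single g (1 : E)) : Fin d → MonoidAlgebra E G)) j =
        if j = i then z j else 0 := by
      intro i
      rw [Finset.sum_apply]
      by_cases hji : j = i
      · subst hji
        rw [if_pos rfl]
        calc ∑ g : G, ((z j).coeff g • (Pi.single j (MonoidAlgebra.single g (1:E)) : Fin d → MonoidAlgebra E G)) j
            = ∑ g : G, (z j).coeff g • MonoidAlgebra.single g (1:E) := by
              exact Finset.sum_congr rfl fun g _ => by
                rw [Pi.smul_apply, Pi.single_eq_same]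
          _ = z j := sum_coeff_single (z j)
      · rw [if_neg hji]
        calc ∑ g : G, ((z i).coeff g • (Pi.single i (MonoidAlgebra.single g (1:E)) : Fin d → MonoidAlgebra E G)) j
            = ∑ g : G, (0 : MonoidAlgebra E G) := by
              exact Finset.sum_congr rfl fun g _ => by
                rw [Pi.smul_apply, Pi.single_eq_of_ne hji, smul_zero]
          _ = 0 := by simp
    rw [Finset.sum_congr rfl fun i _ => this i]
    rw [Finset.sum_ite_eq Finset.univ j (fun _ => z j)]
    simp
  conv_rhs => rw [h3]
  rw [map_sum]
  refine Finset.sum_congr rfl fun i _ => ?_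
  rw [map_sum]
  exact Finset.sum_congr rfl fun g _ => by rw [map_smul, smul_eq_mul]

/-- The value of `gPairing` on basic elements, used to show fullness. -/
theorem gPairing_single {d : ℕ} (i0 : Fin d) (a : G) :
    gPairing (Pi.single i0 (MonoidAlgebra.single a (1 : E)))
        (Pi.single i0 (MonoidAlgebra.single (1 : G) (1 : E))) =
      MonoidAlgebra.single a (1 : E) := by
  classical
  unfold gPairing
  have key : ∀ g : G,
      sPairing (fun i => MonoidAlgebra.single g (1 : E) *
          (Pi.single i0 (MonoidAlgebra.single a (1 : E)) : Fin d → MonoidAlgebra E G) i)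
        (Pi.single i0 (MonoidAlgebra.single (1 : G) (1 : E)) : Fin d → MonoidAlgebra E G) =
      if g = a⁻¹ then 1 else 0 := by
    intro g
    rw [sPairing_pi_single, Pi.single_eq_same, MonoidAlgebra.single_mul_single, one_mul,
      tracePairing_single_left, one_mul, MonoidAlgebra.coeff_single, Finsupp.single_apply]
    have : (1 : G) = (g * a)⁻¹ ↔ g = a⁻¹ := by
      constructor
      · intro h
        have : g * a = 1 := by
          have := congrArg Inv.inv h
          simpa using this.symm
        exact eq_inv_of_mul_eq_one_left this
      · intro h; subst h; simp
    simp only [this]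
  rw [Finset.sum_congr rfl fun g _ => by rw [key g]]
  rw [Finset.sum_eq_single a⁻¹]
  · rw [if_pos rfl, inv_inv]
  · intro g _ hg
    rw [if_neg hg, MonoidAlgebra.single_zero]
  · intro h; exact absurd (Finset.mem_univ a⁻¹) h

/-! ### Bilinearity of `gPairing` -/

theorem gPairing_zero_left {d : ℕ} (ν : Fin d → MonoidAlgebra E G) :
    gPairing 0 ν = 0 := by
  unfold gPairing
  rw [Finset.sum_congr rfl fun g _ => ?_, Finset.sum_const_zero]
  have h1 : (fun i => MonoidAlgebra.single g (1 : E) *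
      (0 : Fin d → MonoidAlgebra E G) i) = (0 : Fin d → MonoidAlgebra E G) :=
    funext fun i => mul_zero _
  rw [h1, show sPairing (0 : Fin d → MonoidAlgebra E G) ν = 0 from
    LinearMap.map_zero₂ (sForm d) ν, MonoidAlgebra.single_zero]

theorem gPairing_add_left {d : ℕ} (μ μ' ν : Fin d → MonoidAlgebra E G) :
    gPairing (μ + μ') ν = gPairing μ ν + gPairing μ' ν := by
  unfold gPairing
  rw [← Finset.sum_add_distrib]
  refine Finset.sum_congr rfl fun g _ => ?_
  have h1 : (fun i => MonoidAlgebra.single g (1 : E) * (μ + μ') i) =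
      (fun i => MonoidAlgebra.single g (1 : E) * μ i) +
      (fun i => MonoidAlgebra.single g (1 : E) * μ' i) :=
    funext fun i => by rw [Pi.add_apply, Pi.add_apply, mul_add]
  rw [h1, sPairing_add_left, MonoidAlgebra.single_add]

theorem gPairing_smul_left {d : ℕ} (e : E) (μ ν : Fin d → MonoidAlgebra E G) :
    gPairing (e • μ) ν = e • gPairing μ ν := by
  unfold gPairing
  rw [Finset.smul_sum]
  refine Finset.sum_congr rfl fun g _ => ?_
  have h1 : (fun i => MonoidAlgebra.single g (1 : E) * (e • μ) i) =
      e • (fun i => MonoidAlgebra.single g (1 : E) * μ i) :=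
    funext fun i => by rw [Pi.smul_apply, Pi.smul_apply, mul_smul_comm]
  rw [h1, sPairing_smul_left, MonoidAlgebra.smul_single']

theorem gPairing_zero_right {d : ℕ} (μ : Fin d → MonoidAlgebra E G) :
    gPairing μ 0 = 0 := by
  unfold gPairing
  rw [Finset.sum_congr rfl fun g _ => ?_, Finset.sum_const_zero]
  rw [show sPairing (fun i => MonoidAlgebra.single g (1:E) * μ i)
    (0 : Fin d → MonoidAlgebra E G) = 0 from
    map_zero (sForm d (fun i => MonoidAlgebra.single g (1:E) * μ i)),
    MonoidAlgebra.single_zero]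

theorem gPairing_add_right {d : ℕ} (μ ν ν' : Fin d → MonoidAlgebra E G) :
    gPairing μ (ν + ν') = gPairing μ ν + gPairing μ ν' := by
  unfold gPairing
  rw [← Finset.sum_add_distrib]
  refine Finset.sum_congr rfl fun g _ => ?_
  rw [sPairing_add_right, MonoidAlgebra.single_add]

theorem gPairing_smul_right {d : ℕ} (e : E) (μ ν : Fin d → MonoidAlgebra E G) :
    gPairing μ (e • ν) = e • gPairing μ ν := by
  unfold gPairing
  rw [Finset.smul_sum]
  refine Finset.sum_congr rfl fun g _ => ?_
  rw [sPairing_smul_right, MonoidAlgebra.smul_single']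

open scoped NumberField

/-- The ring of integers acts on any vector space over the field. -/
noncomputable instance (priority := 50) moduleRingOfIntegers
    {K : Type*} [Field K] [NumberField K] (W : Type*) [AddCommMonoid W] [Module K W] :
    Module (𝓞 K) W :=
  Module.compHom W (algebraMap (𝓞 K) K)

/-- `e ∈ E` is integral, i.e. lies in `𝓞 E ⊆ E`. -/
def MemRingOfIntegers [NumberField E] (e : E) : Prop :=
  ∃ r : 𝓞 E, algebraMap (𝓞 E) E r = e

/-- **Lemma 4.1.** Let `X, Y` be full `𝓞 E[G]`-lattices in `E[G]^d`.  Then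
`(X, Y*) = 𝒜(X,Y)*`, where `𝒜(X,Y) = {λ ∈ E[G] : λX ⊆ Y}`, `*` denotes duals with respect
to the pairings `s` (on `E[G]^d`) and `t` (on `E[G]`), and `(X, Y*)` is the `𝓞 E`-module
generated by the values of the pairing `( · , · )` on `X × Y*`. -/
theorem gPairing_span_eq_dual_of_conductor [NumberField E] {d : ℕ}
    (X Y : Submodule (𝓞 E) (Fin d → MonoidAlgebra E G))
    (hGX : ∀ g : G, ∀ x ∈ X, (fun i => MonoidAlgebra.single g (1 : E) * x i) ∈ X)
    (hGY : ∀ g : G, ∀ y ∈ Y, (fun i => MonoidAlgebra.single g (1 : E) * y i) ∈ Y)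
    (hXfg : X.FG) (hYfg : Y.FG)
    (hXfull : Submodule.span E (X : Set (Fin d → MonoidAlgebra E G)) = ⊤)
    (hYfull : Submodule.span E (Y : Set (Fin d → MonoidAlgebra E G)) = ⊤) :
    (Submodule.span (𝓞 E)
        {r : MonoidAlgebra E G | ∃ x ∈ X, ∃ ν : Fin d → MonoidAlgebra E G,
          (∀ y ∈ Y, MemRingOfIntegers (sPairing ν y)) ∧ r = gPairing x ν} :
      Set (MonoidAlgebra E G)) =
    {μ : MonoidAlgebra E G | ∀ lam : MonoidAlgebra E G,
      (∀ x ∈ X, (fun i => lam * x i) ∈ Y) → MemRingOfIntegers (tracePairing μ lam)} := by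
  classical
  have hinj : Function.Injective (algebraMap (𝓞 E) E) := IsFractionRing.injective _ _
  set gens : Set (MonoidAlgebra E G) :=
    {r : MonoidAlgebra E G | ∃ x ∈ X, ∃ ν : Fin d → MonoidAlgebra E G,
      (∀ y ∈ Y, MemRingOfIntegers (sPairing ν y)) ∧ r = gPairing x ν} with hgens
  apply Set.eq_of_subset_of_subset
  · -- easy inclusion
    intro μ hμ
    simp only [SetLike.mem_coe] at hμ
    simp only [Set.mem_setOf_eq]
    intro lam hlam
    induction hμ using Submodule.span_induction with
    | mem r hr =>
      obtain ⟨x, hxX, ν, hν, rfl⟩ := hr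
      have key : tracePairing (gPairing x ν) lam = sPairing ν (fun i => lam * x i) := by
        rw [tracePairing_gPairing, sPairing_comm]
      rw [key]
      exact hν _ (hlam x hxX)
    | zero =>
      have h0 : tracePairing (0 : MonoidAlgebra E G) lam = 0 :=
        LinearMap.map_zero₂ trForm lam
      rw [h0]
      exact ⟨0, map_zero _⟩
    | add a b ha hb iha ihb =>
      rw [tracePairing_add_left]
      obtain ⟨r1, h1⟩ := iha
      obtain ⟨r2, h2⟩ := ihb
      exact ⟨r1 + r2, by rw [map_add, h1, h2]⟩
    | smul c a ha iha =>
      rw [← algebraMap_smul E c a, tracePairing_smul_left]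
      obtain ⟨r1, h1⟩ := iha
      exact ⟨c * r1, by rw [map_mul, h1]⟩
  · -- hard inclusion
    intro μ hμ
    simp only [Set.mem_setOf_eq] at hμ
    show μ ∈ Submodule.span (𝓞 E) gens
    rcases Nat.eq_zero_or_pos d with hd | hd
    · -- degenerate case d = 0
      subst hd
      have hA0 : ∀ lam : MonoidAlgebra E G, ∀ x ∈ X, (fun i => lam * x i) ∈ Y := by
        intro lam x hx
        have h1 : (fun i : Fin 0 => lam * x i) = 0 := funext fun i => i.elim0
        rw [h1]
        exact Y.zero_mem
      have h0 : ∀ lam, MemRingOfIntegers (tracePairing μ lam) :=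
        fun lam => hμ lam (hA0 lam)
      have hμ0 : μ = 0 := by
        by_contra hne
        obtain ⟨g, hg⟩ : ∃ g, μ.coeff g ≠ 0 := by
          by_contra hgg
          push_neg at hgg
          exact hne (MonoidAlgebra.ext (Finsupp.ext fun g => hgg g))
        have hsurj : Function.Surjective (algebraMap (𝓞 E) E) := by
          intro z
          have h1 := h0 (MonoidAlgebra.single g⁻¹ (z / μ.coeff g))
          rw [tracePairing_single_right, inv_inv] at h1
          obtain ⟨r, hr⟩ := h1
          refine ⟨r, ?_⟩
          rw [hr]
          field_simp
        have hfield : IsField (𝓞 E) := by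
          refine ⟨⟨0, 1, zero_ne_one⟩, mul_comm, ?_⟩
          intro a ha
          obtain ⟨b, hb⟩ := hsurj (algebraMap (𝓞 E) E a)⁻¹
          refine ⟨b, hinj ?_⟩
          rw [map_mul, hb, map_one, mul_inv_cancel₀]
          exact fun h => ha (hinj (by rw [h, map_zero]))
        exact NumberField.RingOfIntegers.not_isField (K := E) hfield
      rw [hμ0]
      exact Submodule.zero_mem _
    · -- main case d > 0
      set i0 : Fin d := ⟨0, hd⟩ with hi0
      let eqM : MonoidAlgebra E G ≃ₗ[E] (G →₀ E) := MonoidAlgebra.coeffLinearEquiv E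
      let bM : Basis G E (MonoidAlgebra E G) := Basis.ofRepr eqM
      haveI : FiniteDimensional E (MonoidAlgebra E G) := Module.Finite.of_basis bM
      let bV : Basis ((_ : Fin d) × G) E (Fin d → MonoidAlgebra E G) := Pi.basis fun _ => bM
      haveI : FiniteDimensional E (Fin d → MonoidAlgebra E G) :=
        Module.Finite.of_basis bV
      set Ys : Set (Fin d → MonoidAlgebra E G) :=
        {ν | ∀ y ∈ Y, MemRingOfIntegers (sPairing ν y)} with hYsdef
      -- common denominator for Y
      obtain ⟨Sy, hSy⟩ := id hYfg
      have hspanbVfull : Submodule.span E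
          ((Submodule.span (𝓞 E) (Set.range ⇑bV) : Submodule (𝓞 E) _) :
            Set (Fin d → MonoidAlgebra E G)) = ⊤ := by
        rw [eq_top_iff, ← bV.span_eq]
        exact Submodule.span_mono fun z hz => Submodule.subset_span hz
      obtain ⟨c, hc0, hcY⟩ := auxExistsDenomFinset (K := E)
        (Submodule.span (𝓞 E) (Set.range ⇑bV)) Sy (fun y => y)
        (fun y _ => by rw [hspanbVfull]; exact Submodule.mem_top)
      have hcY' : ∀ y ∈ Y, algebraMap (𝓞 E) E c • y ∈
          Submodule.span (𝓞 E) (Set.range ⇑bV) := by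
        intro y hy
        rw [← hSy] at hy
        induction hy using Submodule.span_induction with
        | mem z hz => exact hcY z hz
        | zero => rw [smul_zero]; exact Submodule.zero_mem _
        | add u v hu hv ihu ihv => rw [smul_add]; exact Submodule.add_mem _ ihu ihv
        | smul r u hu ihu =>
          have h1 : algebraMap (𝓞 E) E c • r • u = r • algebraMap (𝓞 E) E c • u := by
            change algebraMap (𝓞 E) E c • algebraMap (𝓞 E) E r • u =
              algebraMap (𝓞 E) E r • algebraMap (𝓞 E) E c • u
            rw [smul_smul, mul_comm, ← smul_smul]
          convert Submodule.smul_mem _ r ihu using 1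
          exact h1
      have hcE : algebraMap (𝓞 E) E c ≠ 0 := (map_ne_zero_iff _ hinj).mpr hc0
      let uu : Eˣ := Units.mk0 ((algebraMap (𝓞 E) E c)⁻¹) (inv_ne_zero hcE)
      let bV' := bV.unitsSMul fun _ => uu
      have hbV' : ⇑bV' = fun l => (algebraMap (𝓞 E) E c)⁻¹ • bV l := by
        funext l
        rw [Basis.unitsSMul_apply, Units.smul_def]
        rfl
      have hYF : (Y : Set (Fin d → MonoidAlgebra E G)) ⊆
          ↑(Submodule.span (𝓞 E) (Set.range ⇑bV')) := by
        intro y hy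
        have h2 := auxSmulSpanRange (R := 𝓞 E) ((algebraMap (𝓞 E) E c)⁻¹) bV (hcY' y hy)
        rw [inv_smul_smul₀ hcE y] at h2
        rw [hbV']
        exact h2
      -- Ys is full
      have hYsSup : ((sForm d).dualSubmodule
          (Submodule.span (𝓞 E) (Set.range ⇑bV')) : Set (Fin d → MonoidAlgebra E G))
          ⊆ Ys := by
        intro ν hν y hy
        obtain ⟨r, hr⟩ := Submodule.mem_one.mp (hν y (hYF hy))
        exact ⟨r, hr⟩
      have hYsfull : Submodule.span E Ys = ⊤ := by
        rw [eq_top_iff, ← ((sForm d).dualBasis (sForm_nondeg d) bV').span_eq]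
        refine Submodule.span_le.mpr fun z hz => ?_
        refine Submodule.subset_span (hYsSup ?_)
        rw [SetLike.mem_coe,
          LinearMap.BilinForm.dualSubmodule_span_of_basis _ (sForm_nondeg d) bV']
        exact Submodule.subset_span hz
      -- the set A of multipliers is full
      set A : Set (MonoidAlgebra E G) :=
        {lam | ∀ x ∈ X, (fun i => lam * x i) ∈ Y} with hAdef
      obtain ⟨Sx, hSx⟩ := id hXfg
      have hAfull : Submodule.span E A = ⊤ := by
        rw [eq_top_iff]
        intro lam _
        obtain ⟨c', hc'0, hc'⟩ := auxExistsDenomFinset (K := E) Y Sx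
          (fun x => fun i => lam * (x : Fin d → MonoidAlgebra E G) i)
          (fun x _ => by rw [hYfull]; exact Submodule.mem_top)
        have hc'E : algebraMap (𝓞 E) E c' ≠ 0 := (map_ne_zero_iff _ hinj).mpr hc'0
        have hc'A : algebraMap (𝓞 E) E c' • lam ∈ A := by
          intro x hxX
          rw [← hSx] at hxX
          induction hxX using Submodule.span_induction with
          | mem z hz =>
            have heq : (fun i => (algebraMap (𝓞 E) E c' • lam) * z i) =
                algebraMap (𝓞 E) E c' • fun i => lam * z i :=
              funext fun i => by rw [Pi.smul_apply, smul_mul_assoc]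
            rw [heq]
            exact hc' z hz
          | zero =>
            have heq : (fun i => (algebraMap (𝓞 E) E c' • lam) *
                (0 : Fin d → MonoidAlgebra E G) i) = 0 := funext fun i => mul_zero _
            rw [heq]
            exact Y.zero_mem
          | add u v hu hv ihu ihv =>
            have heq : (fun i => (algebraMap (𝓞 E) E c' • lam) * (u + v) i) =
                (fun i => (algebraMap (𝓞 E) E c' • lam) * u i) +
                fun i => (algebraMap (𝓞 E) E c' • lam) * v i :=
              funext fun i => by rw [Pi.add_apply, Pi.add_apply, mul_add]
            rw [heq]
            exact Y.add_mem ihu ihv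
          | smul r u hu ihu =>
            have heq : (fun i => (algebraMap (𝓞 E) E c' • lam) * (r • u) i) =
                r • fun i => (algebraMap (𝓞 E) E c' • lam) * u i := by
              funext i
              change (algebraMap (𝓞 E) E c' • lam) * (algebraMap (𝓞 E) E r • u i) =
                algebraMap (𝓞 E) E r • ((algebraMap (𝓞 E) E c' • lam) * u i)
              rw [mul_smul_comm]
            convert Y.smul_mem r ihu using 1
            exact heq
        have hlameq : lam = (algebraMap (𝓞 E) E c')⁻¹ • (algebraMap (𝓞 E) E c' • lam) :=
          (inv_smul_smul₀ hc'E lam).symm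
        rw [hlameq]
        exact Submodule.smul_mem _ _ (Submodule.subset_span hc'A)
      -- a basis inside A
      obtain ⟨bset, hbsub, hbspan, hbli⟩ := exists_linearIndependent E A
      rw [hAfull] at hbspan
      haveI : Finite ↥bset := hbli.setFinite.to_subtype
      let bA : Basis ↥bset E (MonoidAlgebra E G) :=
        Basis.mk hbli (by rw [Subtype.range_coe, hbspan])
      have hbA : ⇑bA = fun x : ↥bset => (x : MonoidAlgebra E G) := Basis.coe_mk _ _
      -- L is contained in a f.g. module
      have hLle : Submodule.span (𝓞 E) gens ≤
          trForm.dualSubmodule (Submodule.span (𝓞 E) (Set.range ⇑bA)) := by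
        refine Submodule.span_le.mpr ?_
        rintro r ⟨x, hxX, ν, hν, rfl⟩
        intro z hz
        induction hz using Submodule.span_induction with
        | mem lam hlam =>
          obtain ⟨b, rfl⟩ := hlam
          have hbmem : bA b ∈ A := by rw [hbA]; exact hbsub b.2
          have key : tracePairing (gPairing x ν) (bA b) =
              sPairing ν fun i => bA b * x i := by
            rw [tracePairing_gPairing, sPairing_comm]
          rw [Submodule.mem_one]
          obtain ⟨rr, hrr⟩ := hν _ (hbmem x hxX)
          exact ⟨rr, by rw [trForm_apply, key, hrr]⟩
        | zero =>
          rw [map_zero]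
          exact Submodule.zero_mem _
        | add a b ha hb iha ihb =>
          rw [map_add]
          exact Submodule.add_mem _ iha ihb
        | smul cc z hz ihz =>
          rw [← algebraMap_smul E cc z, map_smul, algebraMap_smul]
          exact Submodule.smul_mem _ cc ihz
      have hLfg : (Submodule.span (𝓞 E) gens).FG := by
        refine auxFgOfLe ?_ (Submodule.fg_span (Set.finite_range
          (trForm.dualBasis trForm_nondeg bA)))
        rw [← LinearMap.BilinForm.dualSubmodule_span_of_basis _ trForm_nondeg bA]
        exact hLle
      -- L is full
      have hsingle : ∀ a : G, MonoidAlgebra.single a (1 : E) ∈ Submodule.span E gens := by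
        intro a
        have hbil : ∀ v, v ∈ Submodule.span E (X : Set (Fin d → MonoidAlgebra E G)) →
            ∀ w ∈ Submodule.span E Ys, gPairing v w ∈ Submodule.span E gens := by
          intro v hv
          induction hv using Submodule.span_induction with
          | mem x hx =>
            intro w hw
            induction hw using Submodule.span_induction with
            | mem ν hν => exact Submodule.subset_span ⟨x, hx, ν, hν, rfl⟩
            | zero => rw [gPairing_zero_right]; exact Submodule.zero_mem _
            | add w1 w2 h1 h2 ih1 ih2 =>
              rw [gPairing_add_right]; exact Submodule.add_mem _ ih1 ih2
            | smul e w hw ihw =>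
              rw [gPairing_smul_right]; exact Submodule.smul_mem _ e ihw
          | zero => intro w hw; rw [gPairing_zero_left]; exact Submodule.zero_mem _
          | add v1 v2 h1 h2 ih1 ih2 =>
            intro w hw
            rw [gPairing_add_left]
            exact Submodule.add_mem _ (ih1 w hw) (ih2 w hw)
          | smul e v hv ihv =>
            intro w hw
            rw [gPairing_smul_left]
            exact Submodule.smul_mem _ e (ihv w hw)
        have h1 : (Pi.single i0 (MonoidAlgebra.single a (1 : E)) :
            Fin d → MonoidAlgebra E G) ∈ Submodule.span E (X : Set _) := by
          rw [hXfull]; exact Submodule.mem_top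
        have h2 : (Pi.single i0 (MonoidAlgebra.single (1 : G) (1 : E)) :
            Fin d → MonoidAlgebra E G) ∈ Submodule.span E Ys := by
          rw [hYsfull]; exact Submodule.mem_top
        have h3 := hbil _ h1 _ h2
        rwa [gPairing_single] at h3
      have hLfull : Submodule.span E
          ((Submodule.span (𝓞 E) gens : Submodule (𝓞 E) (MonoidAlgebra E G)) :
            Set (MonoidAlgebra E G)) = ⊤ := by
        rw [eq_top_iff]
        intro z _
        have hz : z ∈ Submodule.span E gens := by
          rw [← sum_coeff_single z]
          exact Submodule.sum_mem _ fun g _ => Submodule.smul_mem _ _ (hsingle g)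
        exact Submodule.span_le.mpr
          (fun r hr => Submodule.subset_span (Submodule.subset_span hr)) hz
      -- the functional condition
      have hx : ∀ f : MonoidAlgebra E G →ₗ[E] E,
          (∀ m ∈ Submodule.span (𝓞 E) gens, ∃ r : 𝓞 E, algebraMap (𝓞 E) E r = f m) →
          ∃ r : 𝓞 E, algebraMap (𝓞 E) E r = f μ := by
        intro f hf
        set lam₀ : MonoidAlgebra E G :=
          ∑ h : G, MonoidAlgebra.single h (f (MonoidAlgebra.single h⁻¹ 1)) with hlam₀def
        have hbr : ∀ z, tracePairing z lam₀ = f z := fun z => trForm_represents f z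
        have hlam₀A : ∀ x ∈ X, (fun i => lam₀ * x i) ∈ Y := by
          intro x hxX
          refine auxDedekindDual (Module.finrank E (Fin d → MonoidAlgebra E G))
            (Fin d → MonoidAlgebra E G) le_rfl Y hYfg hYfull _ ?_
          intro f' hf'
          set ν₀ : Fin d → MonoidAlgebra E G := fun i => ∑ h : G,
            MonoidAlgebra.single h (f' (Pi.single i (MonoidAlgebra.single h⁻¹ 1)))
            with hν₀def
          have hbr' : ∀ z, sPairing z ν₀ = f' z := fun z => sForm_represents f' z
          have hν₀Ys : ∀ y ∈ Y, MemRingOfIntegers (sPairing ν₀ y) := by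
            intro y hy
            obtain ⟨r, hr⟩ := hf' y hy
            exact ⟨r, by rw [hr, ← hbr' y, sPairing_comm]⟩
          obtain ⟨r, hr⟩ := hf (gPairing x ν₀)
            (Submodule.subset_span ⟨x, hxX, ν₀, hν₀Ys, rfl⟩)
          refine ⟨r, ?_⟩
          rw [hr, ← hbr (gPairing x ν₀), tracePairing_gPairing, hbr']
        obtain ⟨r, hr⟩ := hμ lam₀ hlam₀A
        exact ⟨r, hr.trans (hbr μ)⟩
      exact auxDedekindDual (Module.finrank E (MonoidAlgebra E G)) (MonoidAlgebra E G)
        le_rfl (Submodule.span (𝓞 E) gens) hLfg hLfull μ hx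

end
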